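/- Let M be a von Neumann algebra and let ν, ρ be positive linear forms on M. Then Min_M(ν,ρ) is nonempty if and only if there exists a positive invertible a ∈ M with ρ = ν^a, i.e. ρ(y) = ν(a y a) for all y ∈ M. -/

import Mathlib

open scoped ComplexOrder

noncomputable section

set_option linter.unusedSectionVars false

section Abstract

variable {A : Type*} [CStarAlgebra A] [PartialOrder A] [StarOrderedRing A]

namespace MinAux

lemma witness_of_nonneg {a : A} (ha : 0 ≤ a) : ∃ w : A, a = star w * w := by
  refine ⟨CFC.sqrt a, ?_⟩
  have h1 : IsSelfAdjoint (CFC.sqrt a) := IsSelfAdjoint.of_nonneg (CFC.sqrt_nonneg _)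
  rw [h1.star_eq, ← sq, CFC.sq_sqrt a ha]

lemma selfAdjoint_of_witness {a : A} (ha : ∃ w : A, a = star w * w) : IsSelfAdjoint a := by
  obtain ⟨w, rfl⟩ := ha; exact IsSelfAdjoint.star_mul_self w

lemma nonneg_of_witness {a : A} (ha : ∃ w : A, a = star w * w) : 0 ≤ a := by
  obtain ⟨w, rfl⟩ := ha; exact star_mul_self_nonneg w

lemma inv_selfAdjoint (z : Aˣ) (hz : IsSelfAdjoint (z : A)) :
    IsSelfAdjoint ((↑z⁻¹ : A)) := by
  have h1 : (z : A) * star (↑z⁻¹ : A) = 1 := by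
    rw [← hz.star_eq, ← star_mul, z.inv_mul, star_one]
  have h2 : star (↑z⁻¹ : A) = ↑z⁻¹ * ((z : A) * star (↑z⁻¹ : A)) := by
    rw [← mul_assoc, z.inv_mul, one_mul]
  rw [IsSelfAdjoint, h2, h1, mul_one]

lemma inv_witness (z : Aˣ) (hz : ∃ w : A, (z : A) = star w * w) :
    ∃ w : A, ((↑z⁻¹ : A)) = star w * w := by
  obtain ⟨w, hw⟩ := hz
  have hsa : IsSelfAdjoint ((↑z⁻¹ : A)) :=
    inv_selfAdjoint z (by rw [hw]; exact IsSelfAdjoint.star_mul_self w)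
  refine ⟨w * ↑z⁻¹, ?_⟩
  calc (↑z⁻¹ : A) = ↑z⁻¹ * ((z : A) * ↑z⁻¹) := by rw [z.mul_inv, mul_one]
    _ = (↑z⁻¹ * star w) * (w * ↑z⁻¹) := by rw [hw]; noncomm_ring
    _ = star (w * ↑z⁻¹) * (w * ↑z⁻¹) := by rw [star_mul, hsa.star_eq]

lemma exists_sqrt_unit (z : Aˣ) (hz : 0 ≤ (z : A)) :
    ∃ b : Aˣ, IsSelfAdjoint (b : A) ∧ (b : A) * b = z ∧
      (↑b⁻¹ : A) * ↑b⁻¹ = ↑z⁻¹ ∧ IsSelfAdjoint (↑b⁻¹ : A) := by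
  set s := CFC.sqrt (z : A) with hs
  have hsa : IsSelfAdjoint s := IsSelfAdjoint.of_nonneg (CFC.sqrt_nonneg _)
  have hss : s * s = z := by rw [← sq, hs, CFC.sq_sqrt _ hz]
  have hcs : Commute s ((↑z⁻¹ : A)) := by
    have : Commute s ((z : A)) := by
      rw [← hss]; exact (Commute.refl s).mul_right (Commute.refl s)
    exact this.units_inv_right
  have hval : s * (s * ↑z⁻¹) = 1 := by rw [← mul_assoc, hss, z.mul_inv]
  have hinvval : (s * ↑z⁻¹) * s = 1 := by
    rw [mul_assoc, ← hcs.eq, ← mul_assoc, hss, z.mul_inv]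
  refine ⟨⟨s, s * ↑z⁻¹, hval, hinvval⟩, hsa, hss, ?_, ?_⟩
  · show (s * ↑z⁻¹) * (s * ↑z⁻¹) = (↑z⁻¹ : A)
    calc (s * ↑z⁻¹) * (s * ↑z⁻¹) = s * ((↑z⁻¹ : A) * s) * ↑z⁻¹ := by noncomm_ring
      _ = ((s * s) * ↑z⁻¹) * ↑z⁻¹ := by rw [← hcs.eq]; noncomm_ring
      _ = (↑z⁻¹ : A) := by rw [hss, z.mul_inv, one_mul]
  · exact inv_selfAdjoint _ hsa

lemma isSelfAdjoint_algebraMap (r : ℝ) : IsSelfAdjoint (algebraMap ℝ A r) := by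
  rw [IsScalarTower.algebraMap_apply ℝ ℂ A, IsSelfAdjoint, ← algebraMap_star_comm]
  norm_num

lemma algebraMap_nonneg' {r : ℝ} (hr : 0 ≤ r) : 0 ≤ algebraMap ℝ A r := by
  have h : algebraMap ℝ A r
      = star (algebraMap ℝ A (Real.sqrt r)) * algebraMap ℝ A (Real.sqrt r) := by
    rw [(isSelfAdjoint_algebraMap _).star_eq, ← map_mul, Real.mul_self_sqrt hr]
  rw [h]; exact star_mul_self_nonneg _

lemma algebraMap_witness {r : ℝ} (hr : 0 ≤ r) : ∃ w : A, algebraMap ℝ A r = star w * w :=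
  witness_of_nonneg (algebraMap_nonneg' hr)

section forms

variable {ν ρ : A →L[ℂ] ℂ}

lemma pf_nonneg (hν : ∀ x : A, 0 ≤ ν (star x * x)) {z : A} (hz : ∃ w : A, z = star w * w) :
    0 ≤ (ν z).re ∧ (ν z).im = 0 := by
  obtain ⟨w, rfl⟩ := hz
  have h := hν w
  rw [Complex.le_def] at h
  exact ⟨by simpa using h.1, by simpa using h.2.symm⟩

lemma pf_real (hν : ∀ x : A, 0 ≤ ν (star x * x)) {h : A} (hh : IsSelfAdjoint h) :
    ν h = ((ν h).re : ℂ) := by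
  have hp : 0 ≤ algebraMap ℝ A ‖h‖ + h := by
    have h2 := hh.neg_algebraMap_norm_le_self
    have h3 : (0 : A) ≤ h - -(algebraMap ℝ A ‖h‖) := sub_nonneg.mpr h2
    rwa [sub_neg_eq_add, add_comm] at h3
  have h1 := (pf_nonneg hν (witness_of_nonneg hp)).2
  have h2 := (pf_nonneg hν (algebraMap_witness (norm_nonneg h))).2
  have him : (ν h).im = 0 := by
    have : ν h = ν (algebraMap ℝ A ‖h‖ + h) - ν (algebraMap ℝ A ‖h‖) := by
      rw [map_add]; ring
    rw [this, Complex.sub_im, h1, h2, sub_zero]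
  exact Complex.ext (by simp) (by simp [him])

lemma amgm (hν : ∀ x : A, 0 ≤ ν (star x * x)) (z : Aˣ) (hz : 0 ≤ (z : A))
    {a : A} (ha : IsSelfAdjoint a) :
    2 * (ν a).re ≤ (ν (z : A)).re + (ν (a * ↑z⁻¹ * a)).re := by
  obtain ⟨b, hbsa, hb2, hbinv2, hbinvsa⟩ := exists_sqrt_unit z hz
  have hstar : star ((b : A) - ↑b⁻¹ * a) = (b : A) - a * ↑b⁻¹ := by
    rw [star_sub, hbsa.star_eq, star_mul, hbinvsa.star_eq, ha.star_eq]
  have hexp : star ((b : A) - ↑b⁻¹ * a) * ((b : A) - ↑b⁻¹ * a)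
      = (z : A) + a * ↑z⁻¹ * a - a - a := by
    rw [hstar]
    calc ((b : A) - a * ↑b⁻¹) * ((b : A) - ↑b⁻¹ * a)
        = (b : A) * (b : A) - ((b : A) * ↑b⁻¹) * a - a * ((↑b⁻¹ : A) * (b : A))
            + a * ((↑b⁻¹ : A) * ↑b⁻¹) * a := by noncomm_ring
      _ = (z : A) + a * ↑z⁻¹ * a - a - a := by
          rw [hb2, b.mul_inv, b.inv_mul, hbinv2]; noncomm_ring
  have h0 := (pf_nonneg hν ⟨_, hexp.symm⟩).1
  have hlin : ν ((z : A) + a * ↑z⁻¹ * a - a - a)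
      = ν (z : A) + ν (a * ↑z⁻¹ * a) - ν a - ν a := by
    simp [map_sub, map_add]
  rw [hlin] at h0
  simp only [Complex.sub_re, Complex.add_re] at h0
  linarith

lemma one_add_small_nonneg {m : A} (hm : IsSelfAdjoint m) (h1 : ‖m‖ ≤ 1) :
    (0 : A) ≤ 1 + m := by
  have h2 := hm.neg_algebraMap_norm_le_self
  have h3 : (0 : A) ≤ m + algebraMap ℝ A ‖m‖ := by
    have := sub_nonneg.mpr h2
    rwa [sub_neg_eq_add] at this
  have h4 : (0 : A) ≤ algebraMap ℝ A (1 - ‖m‖) := algebraMap_nonneg' (by linarith)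
  have h5 : (1 : A) + m = algebraMap ℝ A (1 - ‖m‖) + (m + algebraMap ℝ A ‖m‖) := by
    rw [map_sub, map_one]; abel
  rw [h5]; exact add_nonneg h4 h3

end forms

end MinAux

end Abstract

section Abstract2

variable {A : Type*} [CStarAlgebra A] [PartialOrder A] [StarOrderedRing A]

open MinAux Filter Topology in
theorem abstract_min_iff (ν ρ : A →L[ℂ] ℂ) (hν : ∀ x : A, 0 ≤ ν (star x * x))
    (hρ : ∀ x : A, 0 ≤ ρ (star x * x)) :
    (∃ x : Aˣ, (∃ w : A, (x : A) = star w * w) ∧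
      (1/2) * ((ν (x : A)).re + (ρ ((x⁻¹ : Aˣ) : A)).re) =
        sInf {r : ℝ | ∃ z : Aˣ, (∃ w : A, (z : A) = star w * w) ∧
          r = (1/2) * ((ν (z : A)).re + (ρ ((z⁻¹ : Aˣ) : A)).re)}) ↔
    (∃ a : Aˣ, (∃ w : A, (a : A) = star w * w) ∧
      ∀ y : A, ρ y = ν ((a : A) * y * (a : A))) := by
  set S : Set ℝ := {r : ℝ | ∃ z : Aˣ, (∃ w : A, (z : A) = star w * w) ∧
      r = (1/2) * ((ν (z : A)).re + (ρ ((z⁻¹ : Aˣ) : A)).re)} with hSdef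
  have hSlb : ∀ r ∈ S, (0:ℝ) ≤ r := by
    rintro r ⟨z, hzw, rfl⟩
    have h1 := (pf_nonneg hν hzw).1
    have h2 := (pf_nonneg hρ (inv_witness z hzw)).1
    linarith
  constructor
  · rintro ⟨x, hxw, hmin⟩
    refine ⟨x, hxw, ?_⟩
    have hxsa : IsSelfAdjoint (x : A) := selfAdjoint_of_witness hxw
    have hxinvsa : IsSelfAdjoint ((↑x⁻¹ : A)) := inv_selfAdjoint x hxsa
    have hxnn : 0 ≤ (x : A) := nonneg_of_witness hxw
    obtain ⟨b, hbsa, hb2, hbinv2, hbinvsa⟩ := exists_sqrt_unit x hxnn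
    set X : A := (↑x⁻¹ : A) with hXdef
    have hXsa : IsSelfAdjoint X := hxinvsa
    -- key step : ν h = ρ (X h X) for selfadjoint h
    have key : ∀ h : A, IsSelfAdjoint h → ν h = ρ (X * h * X) := by
      intro h hh
      set m : A := (↑b⁻¹ : A) * h * ↑b⁻¹ with hm
      have hmsa : IsSelfAdjoint m := by
        rw [hm, IsSelfAdjoint, star_mul, star_mul, hbinvsa.star_eq, hh.star_eq, mul_assoc]
      set δ : ℝ := 1 / (‖m‖ + 1) with hδ
      have hδpos : 0 < δ := by positivity
      set g : ℝ → ℝ :=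
        fun t => (ρ (X * (h * (X * (h * Ring.inverse ((x : A) + (t : ℂ) • h)))))).re with hg
      -- the fundamental inequality for all |t| < δ
      have step : ∀ t : ℝ, |t| < δ →
          0 ≤ t * ((ν h).re - (ρ (X * (h * X))).re) + t^2 * g t := by
        intro t ht
        have hnorm : ‖(t : ℂ) • m‖ < 1 := by
          rw [norm_smul, Complex.norm_real, Real.norm_eq_abs]
          calc |t| * ‖m‖ ≤ |t| * (‖m‖ + 1) := by
                have := abs_nonneg t
                nlinarith [norm_nonneg m]
            _ < δ * (‖m‖ + 1) := by
                have : (0:ℝ) < ‖m‖ + 1 := by positivity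
                exact mul_lt_mul_of_pos_right ht this
            _ = 1 := by rw [hδ]; field_simp
        have hksa : IsSelfAdjoint ((t : ℂ) • m) := by
          rw [IsSelfAdjoint, star_smul, hmsa.star_eq, Complex.star_def, Complex.conj_ofReal]
        have hknn : (0 : A) ≤ 1 + (t : ℂ) • m := one_add_small_nonneg hksa hnorm.le
        have hkunit : IsUnit ((1 : A) + (t : ℂ) • m) := by
          have := (Units.oneSub (-((t : ℂ) • m)) (by simpa using hnorm)).isUnit
          simpa [sub_neg_eq_add] using this
        have hkUval : (hkunit.unit : A) = 1 + (t : ℂ) • m := hkunit.unit_spec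
        set u : Aˣ := b * hkunit.unit * b with hu
        have hbm : (b : A) * m * (b : A) = h := by
          rw [hm]
          calc (b : A) * ((↑b⁻¹ : A) * h * ↑b⁻¹) * (b : A)
              = ((b : A) * ↑b⁻¹) * h * ((↑b⁻¹ : A) * (b : A)) := by noncomm_ring
            _ = h := by rw [b.mul_inv, b.inv_mul, one_mul, mul_one]
        have huval : (u : A) = (x : A) + (t : ℂ) • h := by
          rw [hu, Units.val_mul, Units.val_mul, hkUval]
          calc (b : A) * (1 + (t : ℂ) • m) * (b : A)
              = (b : A) * (b : A) + (t : ℂ) • ((b : A) * m * (b : A)) := by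
                rw [mul_add, mul_one, add_mul, mul_smul_comm, smul_mul_assoc]
            _ = (x : A) + (t : ℂ) • h := by rw [hb2, hbm]
        have huw : ∃ w : A, (u : A) = star w * w := by
          have hsq : IsSelfAdjoint (CFC.sqrt ((1 : A) + (t : ℂ) • m)) :=
            IsSelfAdjoint.of_nonneg (CFC.sqrt_nonneg _)
          refine ⟨CFC.sqrt ((1 : A) + (t : ℂ) • m) * (b : A), ?_⟩
          rw [hu, Units.val_mul, Units.val_mul, hkUval, star_mul, hbsa.star_eq, hsq.star_eq]
          calc (b : A) * (1 + (t : ℂ) • m) * (b : A)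
              = (b : A) * (CFC.sqrt ((1 : A) + (t : ℂ) • m) * CFC.sqrt ((1 : A) + (t : ℂ) • m))
                  * (b : A) := by rw [← sq, CFC.sq_sqrt _ hknn]
            _ = (b : A) * CFC.sqrt ((1 : A) + (t : ℂ) • m)
                  * (CFC.sqrt ((1 : A) + (t : ℂ) • m) * (b : A)) := by noncomm_ring
        -- minimality
        have hmem : (1/2) * ((ν (u : A)).re + (ρ ((↑u⁻¹ : A))).re) ∈ S := ⟨u, huw, rfl⟩
        have hle : (1/2) * ((ν (x : A)).re + (ρ X).re)
            ≤ (1/2) * ((ν (u : A)).re + (ρ ((↑u⁻¹ : A))).re) := by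
          rw [hXdef, hmin]
          exact csInf_le ⟨0, fun r hr => hSlb r hr⟩ hmem
        -- inverse expansion
        have hRinv : Ring.inverse ((x : A) + (t : ℂ) • h) = (↑u⁻¹ : A) := by
          rw [← huval, Ring.inverse_unit]
        set P : A := X * (h * (↑u⁻¹ : A)) with hP
        have e1 : (↑u⁻¹ : A) = X - (t : ℂ) • P := by
          have h0 : ((x : A) + (t : ℂ) • h) * ↑u⁻¹ = 1 := by rw [← huval]; exact u.mul_inv
          rw [add_mul, smul_mul_assoc] at h0
          have h1 : (x : A) * ↑u⁻¹ = 1 - (t : ℂ) • (h * (↑u⁻¹ : A)) := eq_sub_of_add_eq h0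
          calc (↑u⁻¹ : A) = X * ((x : A) * ↑u⁻¹) := by
                rw [hXdef, ← mul_assoc, x.inv_mul, one_mul]
            _ = X - (t : ℂ) • P := by
                rw [h1, mul_sub, mul_one, mul_smul_comm, ← hP]
        have e1' : P = X * (h * X) - (t : ℂ) • (X * (h * P)) := by
          conv_lhs => rw [hP, e1]
          simp only [mul_sub, mul_smul_comm]
        have hsub : (t : ℂ) • P
            = (t : ℂ) • (X * (h * X)) - ((t : ℂ) * (t : ℂ)) • (X * (h * P)) := by
          conv_lhs => rw [e1']
          rw [smul_sub, smul_smul]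
        have e2 : (↑u⁻¹ : A) = X - (t : ℂ) • (X * (h * X))
            + ((t : ℂ) * (t : ℂ)) • (X * (h * P)) := by
          rw [e1, hsub]; abel
        -- take real parts
        have hν_u : (ν (u : A)).re = (ν (x : A)).re + t * (ν h).re := by
          rw [huval, map_add, map_smul, smul_eq_mul, Complex.add_re, Complex.re_ofReal_mul]
        have hρ_u : (ρ ((↑u⁻¹ : A))).re
            = (ρ X).re - t * (ρ (X * (h * X))).re + (t * t) * (ρ (X * (h * P))).re := by
          rw [e2, map_add, map_sub, map_smul, map_smul, smul_eq_mul, smul_eq_mul]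
          rw [Complex.add_re, Complex.sub_re, Complex.re_ofReal_mul]
          congr 1
          rw [show ((t:ℂ) * (t:ℂ)) = (((t*t : ℝ)):ℂ) by push_cast; ring, Complex.re_ofReal_mul]
        have hgt : g t = (ρ (X * (h * P))).re := by
          simp only [hg]
          rw [hRinv, ← hP]
        rw [hν_u, hρ_u] at hle
        rw [hgt]
        have hsq : t^2 = t * t := sq t
        rw [hsq]
        linarith
      -- limit argument
      have hgc : ContinuousAt g 0 := by
        have l0 : ContinuousAt (fun t : ℝ => (x : A) + (t : ℂ) • h) 0 :=
          continuousAt_const.add ((Complex.continuous_ofReal.continuousAt).smul continuousAt_const)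
        have l1 : ContinuousAt (fun t : ℝ => Ring.inverse ((x : A) + (t : ℂ) • h)) 0 := by
          have h0 : Tendsto (fun t : ℝ => (x : A) + (t : ℂ) • h) (𝓝 (0:ℝ)) (𝓝 ((x : A))) := by
            have := l0.tendsto
            simpa using this
          have h1 := (NormedRing.inverse_continuousAt x).tendsto.comp h0
          rw [ContinuousAt]
          simp only [Complex.ofReal_zero, zero_smul, add_zero]
          exact h1
        exact Complex.continuous_re.continuousAt.comp (ρ.continuous.continuousAt.comp
          (continuousAt_const.mul (continuousAt_const.mul (continuousAt_const.mul
            (continuousAt_const.mul l1)))))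
      set c : ℝ := (ν h).re - (ρ (X * (h * X))).re with hc
      have hlim : Tendsto (fun t : ℝ => c + t * g t) (𝓝 0) (𝓝 c) := by
        have h1 : ContinuousAt (fun t : ℝ => c + t * g t) 0 :=
          continuousAt_const.add (continuousAt_id.mul hgc)
        have h2 := h1.tendsto
        simpa using h2
      have hge : 0 ≤ c := by
        refine ge_of_tendsto (hlim.mono_left (nhdsWithin_le_nhds (s := Set.Ioi (0:ℝ)))) ?_
        filter_upwards [Ioo_mem_nhdsGT hδpos] with t ht
        have h1 := step t (by rw [abs_of_pos ht.1]; exact ht.2)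
        have htne : t ≠ 0 := ne_of_gt ht.1
        have h2 : (0:ℝ) ≤ (t * c + t^2 * g t) / t := div_nonneg h1 ht.1.le
        have h3 : (t * c + t^2 * g t) / t = c + t * g t := by
          field_simp
        rwa [h3] at h2
      have hle0 : c ≤ 0 := by
        refine le_of_tendsto (hlim.mono_left (nhdsWithin_le_nhds (s := Set.Iio (0:ℝ)))) ?_
        filter_upwards [Ioo_mem_nhdsLT (by linarith : -δ < (0:ℝ))] with t ht
        have h1 := step t (by rw [abs_of_neg ht.2]; linarith [ht.1])
        have htne : t ≠ 0 := ne_of_lt ht.2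
        have h2 : (t * c + t^2 * g t) / t ≤ 0 :=
          div_nonpos_iff.mpr (Or.inl ⟨h1, ht.2.le⟩)
        have h3 : (t * c + t^2 * g t) / t = c + t * g t := by
          field_simp
        rwa [h3] at h2
      have hc0 : (ν h).re = (ρ (X * (h * X))).re := by
        have := le_antisymm hle0 hge
        rw [hc] at this
        linarith
      have hXhX : IsSelfAdjoint (X * h * X) := by
        rw [IsSelfAdjoint, star_mul, star_mul, hXsa.star_eq, hh.star_eq, mul_assoc]
      have hgrp : X * h * X = X * (h * X) := mul_assoc _ _ _
      rw [pf_real hν hh, pf_real hρ hXhX, hgrp, hc0]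
    -- extend to all y by decomposition into selfadjoint parts
    have key2 : ∀ y : A, ν y = ρ (X * y * X) := by
      intro y
      set h₁ : A := (2 : ℂ)⁻¹ • (y + star y) with hh₁
      set h₂ : A := (2 : ℂ)⁻¹ • (Complex.I • (star y - y)) with hh₂
      have h1sa : IsSelfAdjoint h₁ := by
        rw [hh₁, IsSelfAdjoint, star_smul, star_add, star_star, add_comm]
        congr 1
        simp [map_ofNat]
      have h2sa : IsSelfAdjoint h₂ := by
        rw [hh₂, IsSelfAdjoint, star_smul, star_smul, star_sub, star_star]
        rw [Complex.star_def, Complex.conj_I, neg_smul, ← smul_neg, neg_sub]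
        congr 1
        simp [map_ofNat]
      have hII : Complex.I * (2:ℂ)⁻¹ * Complex.I = -(2:ℂ)⁻¹ := by
        rw [mul_comm Complex.I ((2:ℂ)⁻¹), mul_assoc, Complex.I_mul_I]
        ring
      have hy : h₁ + Complex.I • h₂ = y := by
        rw [hh₁, hh₂, smul_smul, smul_smul, hII]
        match_scalars <;> ring
      obtain ⟨p, q, hpsa, hqsa, hy2⟩ :
          ∃ p q : A, IsSelfAdjoint p ∧ IsSelfAdjoint q ∧ y = p + Complex.I • q :=
        ⟨h₁, h₂, h1sa, h2sa, hy.symm⟩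
      calc ν y = ρ (X * p * X) + Complex.I * ρ (X * q * X) := by
            conv_lhs => rw [hy2]
            rw [map_add, map_smul, smul_eq_mul, key p hpsa, key q hqsa]
        _ = ρ (X * (p + Complex.I • q) * X) := by
            rw [mul_add X p (Complex.I • q), add_mul, mul_smul_comm, smul_mul_assoc,
              map_add, map_smul, smul_eq_mul]
        _ = ρ (X * y * X) := by rw [← hy2]
    intro y
    have h1 := key2 ((x : A) * y * (x : A))
    have h2 : X * ((x : A) * y * (x : A)) * X = y := by
      calc X * ((x : A) * y * (x : A)) * X
          = (X * (x : A)) * y * ((x : A) * X) := by noncomm_ring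
        _ = y := by rw [hXdef, x.inv_mul, x.mul_inv, one_mul, mul_one]
    rw [h2] at h1
    exact h1.symm
  · rintro ⟨a, haw, hrep⟩
    refine ⟨a, haw, ?_⟩
    have hasa : IsSelfAdjoint (a : A) := selfAdjoint_of_witness haw
    have hfa : ρ ((↑a⁻¹ : A)) = ν (a : A) := by
      rw [hrep]
      congr 1
      rw [mul_assoc, a.inv_mul, mul_one]
    have hlb : ∀ r ∈ S, (1/2) * ((ν (a : A)).re + (ρ ((↑a⁻¹ : A))).re) ≤ r := by
      rintro r ⟨z, hzw, rfl⟩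
      have hzn : 0 ≤ (z : A) := nonneg_of_witness hzw
      have hamgm := amgm hν z hzn hasa
      have h1 : (ρ ((↑z⁻¹ : A))).re = (ν ((a : A) * ↑z⁻¹ * (a : A))).re := by rw [hrep _]
      have h2 : (ρ ((↑a⁻¹ : A))).re = (ν (a : A)).re := by rw [hfa]
      rw [h1, h2]
      linarith
    have hmem : (1/2) * ((ν (a : A)).re + (ρ ((↑a⁻¹ : A))).re) ∈ S := ⟨a, haw, rfl⟩
    exact le_antisymm (le_csInf ⟨_, hmem⟩ hlb) (csInf_le ⟨_, fun r hr => hlb r hr⟩ hmem)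

end Abstract2



variable {H : Type*} [NormedAddCommGroup H] [InnerProductSpace ℂ H] [CompleteSpace H]

/-- A von Neumann algebra is closed under scalar multiplication by complex numbers. -/
instance VonNeumannAlgebra.instSMulMemClass :
    SMulMemClass (VonNeumannAlgebra H) ℂ (H →L[ℂ] H) where
  smul_mem {s} c x hx := s.toStarSubalgebra.smul_mem hx c

private lemma isClosed_centralizer' {A : Type*} [NormedRing A] (s : Set A) :
    IsClosed (Set.centralizer s) := by
  have h : Set.centralizer s = ⋂ a ∈ s, {x : A | a * x = x * a} := by
    ext x; rw [Set.mem_centralizer_iff]; simp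
  rw [h]
  exact isClosed_biInter fun a _ =>
    isClosed_eq (continuous_const.mul continuous_id) (continuous_id.mul continuous_const)

/-- A von Neumann algebra is norm-closed in `B(H)`; consequently the subtype `↥M`
inherits a C*-algebra structure. -/
instance VonNeumannAlgebra.instIsClosed (M : VonNeumannAlgebra H) :
    IsClosed (M : Set (H →L[ℂ] H)) :=
  M.centralizer_centralizer ▸ isClosed_centralizer' _

variable {M : VonNeumannAlgebra H}

/-- `ν` is a positive linear form on the von Neumann algebra `M`:
a bounded linear functional with `ν(x*x) ≥ 0` for all `x`. -/
def IsPosForm (ν : M →L[ℂ] ℂ) : Prop := ∀ x : M, 0 ≤ ν (star x * x)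

/-- The set `Γ_M(ν,ρ) = { f ∈ M* : |f(y*x)|² ≤ ν(y*y)·ρ(x*x) for all x, y ∈ M }`. -/
def GammaSet (ν ρ : M →L[ℂ] ℂ) : Set (M →L[ℂ] ℂ) :=
  {f | ∀ x y : M, ‖f (star y * x)‖ ^ 2 ≤ (ν (star y * y)).re * (ρ (star x * x)).re}

/-- The set of minimizing elements `Min_M(ν,ρ)` is nonempty if and only if
there exists a positive invertible `a ∈ M` with `ρ = ν^a`, i.e. `ρ(y) = ν(a y a)` for all `y`. -/
theorem minSet_nonempty_iff
    (ν ρ : M →L[ℂ] ℂ) (hν : IsPosForm ν) (hρ : IsPosForm ρ) :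
    (∃ x : Mˣ, (∃ w : M, (x : M) = star w * w) ∧
      (1/2) * ((ν (x : M)).re + (ρ ((x⁻¹ : Mˣ) : M)).re) =
        sInf {r : ℝ | ∃ z : Mˣ, (∃ w : M, (z : M) = star w * w) ∧
          r = (1/2) * ((ν (z : M)).re + (ρ ((z⁻¹ : Mˣ) : M)).re)}) ↔
    (∃ a : Mˣ, (∃ w : M, (a : M) = star w * w) ∧
      ∀ y : M, ρ y = ν ((a : M) * y * (a : M))) := by
  exact @abstract_min_iff M _ (CStarAlgebra.spectralOrder _)
    (CStarAlgebra.spectralOrderedRing _) ν ρ hν hρ
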